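/- For every real δ with 0 < δ < 0.018 and every integer n ≥ 1, there exists a set S of binary strings of length n such that any two distinct elements of S have Levenshtein edit distance greater than 2·⌊δn⌋, and the cardinality of S is at least 2^{n/2} (as a real number). -/

import Mathlib

/-- Cost structure for Levenshtein distance (removed from Mathlib; restored with its old meaning). -/
structure Levenshtein.Cost (α β δ : Type*) where
  delete : α → δ
  insert : β → δ
  substitute : α → β → δ

/-- Default unit costs (as in the older Mathlib). -/
def Levenshtein.defaultCost {α : Type*} [DecidableEq α] : Levenshtein.Cost α α ℕ where
  delete _ := 1
  insert _ := 1
  substitute a b := if a = b then 0 else 1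

/-- Levenshtein distance, given by the recursion the older Mathlib proved for its definition. -/
def levenshtein {α β δ : Type*} [AddZeroClass δ] [Min δ] (C : Levenshtein.Cost α β δ) :
    List α → List β → δ
  | [], [] => 0
  | x :: xs, [] => C.delete x + levenshtein C xs []
  | [], y :: ys => C.insert y + levenshtein C [] ys
  | x :: xs, y :: ys =>
    min (C.delete x + levenshtein C xs (y :: ys))
      (min (C.insert y + levenshtein C (x :: xs) ys) (C.substitute x y + levenshtein C xs ys))

@[simp] lemma Levenshtein.defaultCost_delete {α : Type*} [DecidableEq α] (a : α) :
    (Levenshtein.defaultCost (α := α)).delete a = 1 := rfl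
@[simp] lemma Levenshtein.defaultCost_insert {α : Type*} [DecidableEq α] (a : α) :
    (Levenshtein.defaultCost (α := α)).insert a = 1 := rfl
@[simp] lemma Levenshtein.defaultCost_substitute {α : Type*} [DecidableEq α] (a b : α) :
    (Levenshtein.defaultCost (α := α)).substitute a b = if a = b then 0 else 1 := rfl

section
variable {α β δ : Type*} [AddZeroClass δ] [Min δ] (C : Levenshtein.Cost α β δ)
@[simp] lemma levenshtein_nil_nil : levenshtein C [] [] = 0 := by rw [levenshtein]
@[simp] lemma levenshtein_nil_cons (y : β) (ys : List β) :
    levenshtein C [] (y :: ys) = C.insert y + levenshtein C [] ys := by rw [levenshtein]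
@[simp] lemma levenshtein_cons_nil (x : α) (xs : List α) :
    levenshtein C (x :: xs) [] = C.delete x + levenshtein C xs [] := by rw [levenshtein]
@[simp] lemma levenshtein_cons_cons (x : α) (xs : List α) (y : β) (ys : List β) :
    levenshtein C (x :: xs) (y :: ys) =
      min (C.delete x + levenshtein C xs (y :: ys))
        (min (C.insert y + levenshtein C (x :: xs) ys) (C.substitute x y + levenshtein C xs ys)) := by
  rw [levenshtein]
end

open List Finset

lemma lev_nil_left (y : List Bool) :
    levenshtein Levenshtein.defaultCost ([] : List Bool) y = y.length := by
  induction y with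
  | nil => simp
  | cons a t ih => simp [ih]; omega

lemma lev_nil_right (x : List Bool) :
    levenshtein Levenshtein.defaultCost x ([] : List Bool) = x.length := by
  induction x with
  | nil => simp
  | cons a t ih => simp [ih]; omega

lemma exists_common (x : List Bool) : ∀ y : List Bool,
    ∃ z : List Bool, z <+ x ∧ z <+ y ∧
      x.length ≤ z.length + levenshtein Levenshtein.defaultCost x y ∧
      y.length ≤ z.length + levenshtein Levenshtein.defaultCost x y := by
  induction x with
  | nil =>
    intro y
    exact ⟨[], by simp, by simp, by simp [lev_nil_left], by simp [lev_nil_left]⟩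
  | cons a xs ihx =>
    intro y
    induction y with
    | nil =>
      refine ⟨[], by simp, by simp, ?_, by simp⟩
      simp [lev_nil_right]
    | cons b ys ihy =>
      rw [levenshtein_cons_cons]
      rcases min_cases (Levenshtein.defaultCost.delete a
          + levenshtein Levenshtein.defaultCost xs (b :: ys))
        (min (Levenshtein.defaultCost.insert b
            + levenshtein Levenshtein.defaultCost (a :: xs) ys)
          (Levenshtein.defaultCost.substitute a b
            + levenshtein Levenshtein.defaultCost xs ys)) with ⟨h, _⟩ | ⟨h, _⟩
      · rw [h]
        obtain ⟨z, hzx, hzy, hx, hy⟩ := ihx (b :: ys)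
        exact ⟨z, hzx.cons a, hzy, by simp at hx hy ⊢; omega, by simp at hx hy ⊢; omega⟩
      · rw [h]
        rcases min_cases (Levenshtein.defaultCost.insert b
            + levenshtein Levenshtein.defaultCost (a :: xs) ys)
          (Levenshtein.defaultCost.substitute a b
            + levenshtein Levenshtein.defaultCost xs ys) with ⟨h2, _⟩ | ⟨h2, _⟩
        · rw [h2]
          obtain ⟨z, hzx, hzy, hx, hy⟩ := ihy
          exact ⟨z, hzx, hzy.cons b, by simp at hx hy ⊢; omega, by simp at hx hy ⊢; omega⟩
        · rw [h2]
          obtain ⟨z, hzx, hzy, hx, hy⟩ := ihx ys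
          by_cases hab : a = b
          · subst hab
            exact ⟨a :: z, hzx.cons_cons a, hzy.cons_cons a, by simp at hx hy ⊢; omega,
              by simp at hx hy ⊢; omega⟩
          · exact ⟨z, hzx.cons a, hzy.cons b, by simp [hab] at hx hy ⊢; omega,
              by simp [hab] at hx hy ⊢; omega⟩

def allB : ℕ → Finset (List Bool)
  | 0 => {([] : List Bool)}
  | n + 1 => ((allB n).image (true :: ·)) ∪ ((allB n).image (false :: ·))

lemma mem_allB : ∀ {n : ℕ} {y : List Bool}, y ∈ allB n ↔ y.length = n := by
  intro n
  induction n with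
  | zero => intro y; simp [allB, List.length_eq_zero_iff]
  | succ n ih =>
    intro y
    cases y with
    | nil => simp [allB]
    | cons b t =>
      simp [allB, ih]
      cases b <;> simp

lemma cons_inj (b : Bool) : Function.Injective (b :: · : List Bool → List Bool) := by
  intro x y h; simpa using h

lemma card_allB (n : ℕ) : (allB n).card = 2 ^ n := by
  induction n with
  | zero => simp [allB]
  | succ n ih =>
    rw [allB, Finset.card_union_of_disjoint, Finset.card_image_of_injective _ (cons_inj true),
      Finset.card_image_of_injective _ (cons_inj false), ih]
    · ring
    · rw [Finset.disjoint_left]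
      rintro a ha hb
      simp only [Finset.mem_image] at ha hb
      obtain ⟨x, -, rfl⟩ := ha
      obtain ⟨y, -, h⟩ := hb
      simp at h

lemma cons_sublist_cases {c b : Bool} {z' y' : List Bool} (h : c :: z' <+ b :: y') :
    c :: z' <+ y' ∨ (b = c ∧ z' <+ y') := by
  cases h with
  | cons _ h => exact Or.inl h
  | cons_cons => exact Or.inr ⟨rfl, by assumption⟩

lemma step_bound (n : ℕ) (c : Bool) (z' : List Bool) :
    ((allB (n+1)).filter (fun y => c :: z' <+ y)).card ≤
      2 * ((allB n).filter (fun y => c :: z' <+ y)).card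
        + ((allB n).filter (fun y => z' <+ y)).card := by
  have hsplit : allB (n+1) = ((allB n).image (c :: ·)) ∪ ((allB n).image ((!c) :: ·)) := by
    cases c <;> simp [allB, Finset.union_comm]
  rw [hsplit, Finset.filter_union]
  refine (Finset.card_union_le _ _).trans ?_
  rw [Finset.filter_image, Finset.filter_image,
    Finset.card_image_of_injective _ (cons_inj c), Finset.card_image_of_injective _ (cons_inj (!c))]
  have h1 : (allB n).filter (fun a => c :: z' <+ c :: a) ⊆
      ((allB n).filter (fun y => c :: z' <+ y)) ∪ ((allB n).filter (fun y => z' <+ y)) := by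
    intro a ha
    simp only [Finset.mem_filter, Finset.mem_union] at ha ⊢
    rcases cons_sublist_cases ha.2 with h | h
    · exact Or.inl ⟨ha.1, h⟩
    · exact Or.inr ⟨ha.1, h.2⟩
  have h2 : (allB n).filter (fun a => c :: z' <+ (!c) :: a) ⊆
      (allB n).filter (fun y => c :: z' <+ y) := by
    intro a ha
    simp only [Finset.mem_filter] at ha ⊢
    rcases cons_sublist_cases ha.2 with h | h
    · exact ⟨ha.1, h⟩
    · cases c <;> simp_all
  calc ((allB n).filter (fun a => c :: z' <+ c :: a)).card
        + ((allB n).filter (fun a => c :: z' <+ (!c) :: a)).card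
      ≤ (((allB n).filter (fun y => c :: z' <+ y)) ∪ ((allB n).filter (fun y => z' <+ y))).card
        + ((allB n).filter (fun y => c :: z' <+ y)).card :=
        Nat.add_le_add (Finset.card_le_card h1) (Finset.card_le_card h2)
    _ ≤ (((allB n).filter (fun y => c :: z' <+ y)).card + ((allB n).filter (fun y => z' <+ y)).card)
        + ((allB n).filter (fun y => c :: z' <+ y)).card :=
        Nat.add_le_add_right (Finset.card_union_le _ _) _
    _ ≤ _ := by omega

lemma count_super : ∀ n : ℕ, ∀ z : List Bool, z.length ≤ n →
    ((allB n).filter (fun y => z <+ y)).card ≤ n.choose z.length * 2 ^ (n - z.length) := by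
  intro n
  induction n with
  | zero =>
    intro z hz
    calc ((allB 0).filter (fun y => z <+ y)).card ≤ (allB 0).card := Finset.card_filter_le _ _
      _ = 1 := by simp [allB]
      _ ≤ _ := by interval_cases hz' : z.length <;> simp_all
  | succ n ih =>
    intro z hz
    rcases Nat.lt_or_ge z.length (n+1) with hlt | hge
    · cases z with
      | nil =>
        calc ((allB (n+1)).filter (fun y => [] <+ y)).card ≤ (allB (n+1)).card :=
              Finset.card_filter_le _ _
          _ = 2 ^ (n+1) := card_allB _
          _ ≤ _ := by simp
      | cons c z' =>
        have hz' : z'.length ≤ n := by simp at hlt; omega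
        have hz2 : z'.length + 1 ≤ n := by simpa using hlt
        have := step_bound n c z'
        have h1 := ih (c :: z') (by simpa using hlt)
        have h2 := ih z' hz'
        refine this.trans ?_
        have hlen : (c :: z').length = z'.length + 1 := by simp
        rw [hlen]
        have key : 2 * (n.choose (z'.length + 1) * 2 ^ (n - (z'.length + 1)))
            + n.choose z'.length * 2 ^ (n - z'.length)
            = (n+1).choose (z'.length + 1) * 2 ^ (n + 1 - (z'.length + 1)) := by
          rw [Nat.choose_succ_succ]
          have e1 : n - z'.length = (n - (z'.length + 1)) + 1 := by omega
          have e2 : n + 1 - (z'.length + 1) = (n - (z'.length + 1)) + 1 := by omega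
          rw [e1, e2]
          ring
        rw [← key]
        simp only [hlen] at h1
        omega
    · have hz1 : z.length = n + 1 := by omega
      have hsub : (allB (n+1)).filter (fun y => z <+ y) ⊆ {z} := by
        intro y hy
        simp only [Finset.mem_filter, mem_allB] at hy
        have := hy.2.eq_of_length (by omega)
        simp [this]
      calc _ ≤ ({z} : Finset (List Bool)).card := Finset.card_le_card hsub
        _ = 1 := rfl
        _ ≤ _ := by rw [hz1]; simp

open Classical in
noncomputable def ball (n r : ℕ) (t : List Bool) : Finset (List Bool) :=
  (allB n).filter (fun y => ∃ z : List Bool, z <+ t ∧ z <+ y ∧ n ≤ z.length + r)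

lemma ball_card (n r : ℕ) (hr : r ≤ n) (t : List Bool) (ht : t.length = n) :
    (ball n r t).card ≤ ∑ k ∈ Finset.range (r+1), n.choose k * (n.choose k * 2 ^ k) := by
  classical
  have hsub : ball n r t ⊆ (Finset.range (r+1)).biUnion (fun k =>
      (t.sublistsLen (n-k)).toFinset.biUnion (fun z => (allB n).filter (fun y => z <+ y))) := by
    intro y hy
    simp only [ball, Finset.mem_filter] at hy
    obtain ⟨hyA, z, hzt, hzy, hlen⟩ := hy
    have hzn : z.length ≤ n := ht ▸ hzt.length_le
    refine Finset.mem_biUnion.2 ⟨n - z.length, ?_, ?_⟩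
    · simp; omega
    refine Finset.mem_biUnion.2 ⟨z, ?_, ?_⟩
    · rw [List.mem_toFinset, List.mem_sublistsLen]
      exact ⟨hzt, by omega⟩
    · simp [Finset.mem_filter, hyA, hzy]
  refine (Finset.card_le_card hsub).trans ((Finset.card_biUnion_le).trans ?_)
  refine Finset.sum_le_sum ?_
  intro k hk
  simp only [Finset.mem_range] at hk
  have hk' : k ≤ n := le_trans (by omega) hr
  refine (Finset.card_biUnion_le).trans ?_
  have hbound : ∀ z ∈ (t.sublistsLen (n-k)).toFinset,
      ((allB n).filter (fun y => z <+ y)).card ≤ n.choose k * 2 ^ k := by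
    intro z hz
    rw [List.mem_toFinset, List.mem_sublistsLen] at hz
    have := count_super n z (by omega)
    rwa [hz.2, show n - (n - k) = k by omega, Nat.choose_symm hk'] at this
  refine (Finset.sum_le_sum hbound).trans ?_
  rw [Finset.sum_const, smul_eq_mul]
  have hcard : (t.sublistsLen (n-k)).toFinset.card ≤ n.choose k := by
    refine (List.toFinset_card_le _).trans ?_
    rw [List.length_sublistsLen, ht]
    rw [Nat.choose_symm hk']
  exact Nat.mul_le_mul_right _ hcard

lemma choose_mono_half (n : ℕ) : ∀ l k, k ≤ l → 2 * l ≤ n → n.choose k ≤ n.choose l := by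
  intro l
  induction l with
  | zero => intro k hk _; interval_cases k; rfl
  | succ l ih =>
    intro k hk hl
    rcases Nat.lt_or_ge k (l+1) with h | h
    · exact (ih k (by omega) (by omega)).trans
        (Nat.choose_le_succ_of_lt_half_left (by omega))
    · have : k = l + 1 := by omega
      subst this; rfl

lemma sum_term (n r : ℕ) (hr : r ≤ n) :
    (∑ k ∈ Finset.range (r+1), (n.choose k : ℝ)) * ((9/250)^r * (241/250)^(n-r)) ≤ 1 := by
  have key : ∀ k ∈ Finset.range (r+1),
      (n.choose k : ℝ) * ((9/250)^r * (241/250)^(n-r))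
        ≤ (n.choose k : ℝ) * ((9/250)^k * (241/250)^(n-k)) := by
    intro k hk
    simp only [Finset.mem_range] at hk
    have hle : ((9:ℝ)/250)^r * (241/250)^(n-r) ≤ (9/250)^k * (241/250)^(n-k) := by
      have e1 : ((9:ℝ)/250)^r = (9/250)^k * (9/250)^(r-k) := by
        rw [← pow_add]; congr 1; omega
      have e2 : ((241:ℝ)/250)^(r-k) * (241/250)^(n-r) = (241/250)^(n-k) := by
        rw [← pow_add]; congr 1; omega
      calc ((9:ℝ)/250)^r * (241/250)^(n-r)
          = (9/250)^k * ((9/250)^(r-k) * (241/250)^(n-r)) := by rw [e1]; ring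
        _ ≤ (9/250)^k * ((241/250)^(r-k) * (241/250)^(n-r)) := by
            gcongr <;> norm_num
        _ = (9/250)^k * (241/250)^(n-k) := by rw [e2]
    exact mul_le_mul_of_nonneg_left hle (by positivity)
  calc (∑ k ∈ Finset.range (r+1), (n.choose k : ℝ)) * ((9/250)^r * (241/250)^(n-r))
      = ∑ k ∈ Finset.range (r+1), (n.choose k : ℝ) * ((9/250)^r * (241/250)^(n-r)) := by
        rw [Finset.sum_mul]
    _ ≤ ∑ k ∈ Finset.range (r+1), (n.choose k : ℝ) * ((9/250)^k * (241/250)^(n-k)) :=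
        Finset.sum_le_sum key
    _ ≤ ∑ k ∈ Finset.range (n+1), (n.choose k : ℝ) * ((9/250)^k * (241/250)^(n-k)) := by
        refine Finset.sum_le_sum_of_subset_of_nonneg ?_ ?_
        · exact Finset.range_subset_range.2 (by omega)
        · intro k _ _; positivity
    _ = ((9:ℝ)/250 + 241/250)^n := by
        rw [add_pow]
        refine Finset.sum_congr rfl ?_
        intro k _; ring
    _ = 1 := by norm_num

lemma numeric_key (n r : ℕ) (h : 250 * r ≤ 9 * n) :
    (((250:ℝ)/9)^r * ((250:ℝ)/241)^(n-r))^2 * 2^r ≤ (2:ℝ)^((n:ℝ)/2) := by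
  have hrn : r ≤ n := by omega
  set Y : ℝ := (((250:ℝ)/9)^r * ((250:ℝ)/241)^(n-r))^2 * 2^r with hYdef
  have hY0 : 0 ≤ Y := by positivity
  have h90 : Y^90 ≤ (2:ℝ)^(45*n) := by
    have hA : ((250:ℝ)/9)^(180*r) ≤ (2:ℝ)^(864*r) := by
      calc ((250:ℝ)/9)^(180*r) = (((250:ℝ)/9)^5)^(36*r) := by rw [← pow_mul]; congr 1; ring
        _ ≤ ((2:ℝ)^24)^(36*r) := pow_le_pow_left₀ (by positivity) (by norm_num) _
        _ = (2:ℝ)^(864*r) := by rw [← pow_mul]; congr 1; ring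
    have hB : ((250:ℝ)/241)^(180*(n-r)) ≤ (2:ℝ)^(10*(n-r)) := by
      calc ((250:ℝ)/241)^(180*(n-r)) = (((250:ℝ)/241)^18)^(10*(n-r)) := by
            rw [← pow_mul]; congr 1; ring
        _ ≤ (2:ℝ)^(10*(n-r)) := pow_le_pow_left₀ (by positivity)
            (by rw [div_pow, div_le_iff₀ (by positivity)]; norm_num) _
    have e : Y^90 = ((250:ℝ)/9)^(180*r) * ((250:ℝ)/241)^(180*(n-r)) * 2^(90*r) := by
      rw [hYdef]; ring
    rw [e]
    calc ((250:ℝ)/9)^(180*r) * ((250:ℝ)/241)^(180*(n-r)) * 2^(90*r)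
        ≤ (2:ℝ)^(864*r) * (2:ℝ)^(10*(n-r)) * 2^(90*r) := by
          refine mul_le_mul_of_nonneg_right (mul_le_mul hA hB (by positivity) (by positivity))
            (by positivity)
      _ = (2:ℝ)^(864*r + 10*(n-r) + 90*r) := by rw [← pow_add, ← pow_add]
      _ ≤ (2:ℝ)^(45*n) := by
          refine pow_le_pow_right₀ (by norm_num) ?_
          omega
  have hZ : ((2:ℝ)^((n:ℝ)/2))^(90:ℕ) = (2:ℝ)^(45*n) := by
    rw [← Real.rpow_natCast ((2:ℝ)^((n:ℝ)/2)) 90, ← Real.rpow_mul (by norm_num)]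
    rw [show (n:ℝ)/2*(90:ℕ) = ((45*n : ℕ):ℝ) by push_cast; ring, Real.rpow_natCast]
  refine le_of_pow_le_pow_left₀ (n := 90) (by norm_num) (by positivity) ?_
  rw [hZ]
  exact h90


/-- Greedy code existence (Lemma 4.1): for every `0 < δ < 0.018` and `n ≥ 1`
there is a set of binary strings of length `n`, pairwise at Levenshtein edit
distance greater than `2⌊δn⌋`, of cardinality at least `2^{n/2}`. -/
theorem stmt_13 (δ : ℝ) (h0 : 0 < δ) (h1 : δ < 0.018) (n : ℕ) (hn : 1 ≤ n) :
    ∃ S : Finset (List Bool),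
      (∀ x ∈ S, x.length = n) ∧
      (∀ x ∈ S, ∀ y ∈ S, x ≠ y →
        2 * ⌊δ * (n : ℝ)⌋₊ < levenshtein Levenshtein.defaultCost x y) ∧
      (2 : ℝ) ^ ((n : ℝ) / 2) ≤ (S.card : ℝ) := by
  classical
  set r : ℕ := 2 * ⌊δ * (n : ℝ)⌋₊ with hrdef
  have hn1 : (1:ℝ) ≤ (n:ℝ) := by exact_mod_cast hn
  have h9 : 250 * r ≤ 9 * n := by
    have hfl : (⌊δ * (n:ℝ)⌋₊ : ℝ) ≤ δ * n := Nat.floor_le (by positivity)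
    have hlt : (250 * r : ℝ) < (9 * n : ℝ) := by
      have : δ * n < 0.018 * n := by nlinarith
      rw [hrdef]; push_cast; nlinarith
    exact_mod_cast hlt.le
  have hrn : r ≤ n := by omega
  have h2r : 2 * r ≤ n := by omega
  -- the family of valid codes
  obtain ⟨T, hTmem, hTmax⟩ := Finset.exists_max_image
    ((allB n).powerset.filter (fun T => ∀ x ∈ T, ∀ y ∈ T, x ≠ y →
      r < levenshtein Levenshtein.defaultCost x y)) Finset.card
    ⟨∅, by simp⟩
  rw [Finset.mem_filter, Finset.mem_powerset] at hTmem
  obtain ⟨hTsub, hTpair⟩ := hTmem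
  -- covering property
  have hcover : ∀ a ∈ allB n, ∃ t ∈ T, a ∈ ball n r t := by
    intro a ha
    by_contra hno
    push_neg at hno
    have haln : a.length = n := mem_allB.1 ha
    have haT : a ∉ T := by
      intro haT
      refine hno a haT ?_
      rw [ball, Finset.mem_filter]
      exact ⟨ha, a, List.Sublist.refl a, List.Sublist.refl a, by omega⟩
    have hins : insert a T ∈ (allB n).powerset.filter (fun T => ∀ x ∈ T, ∀ y ∈ T, x ≠ y →
        r < levenshtein Levenshtein.defaultCost x y) := by
      rw [Finset.mem_filter, Finset.mem_powerset]
      refine ⟨Finset.insert_subset ha hTsub, ?_⟩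
      intro x hx y hy hxy
      rcases Finset.mem_insert.1 hx with rfl | hxT
      · rcases Finset.mem_insert.1 hy with rfl | hyT
        · exact absurd rfl hxy
        · by_contra hle
          push_neg at hle
          obtain ⟨z, hzx, hzy, hlx, hly⟩ := exists_common x y
          refine hno y hyT ?_
          rw [ball, Finset.mem_filter]
          exact ⟨ha, z, hzy, hzx, by omega⟩
      · rcases Finset.mem_insert.1 hy with rfl | hyT
        · by_contra hle
          push_neg at hle
          obtain ⟨z, hzx, hzy, hlx, hly⟩ := exists_common x y
          refine hno x hxT ?_
          rw [ball, Finset.mem_filter]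
          exact ⟨ha, z, hzx, hzy, by omega⟩
        · exact hTpair x hxT y hyT hxy
    have hc := hTmax _ hins
    rw [Finset.card_insert_of_notMem haT] at hc
    omega
  -- counting
  set Bmax : ℕ := ∑ k ∈ Finset.range (r+1), n.choose k * (n.choose k * 2 ^ k) with hBdef
  have hcount : 2 ^ n ≤ T.card * Bmax := by
    calc 2 ^ n = (allB n).card := (card_allB n).symm
      _ ≤ (T.biUnion (fun t => ball n r t)).card := by
          refine Finset.card_le_card ?_
          intro a ha
          obtain ⟨t, ht, hb⟩ := hcover a ha
          exact Finset.mem_biUnion.2 ⟨t, ht, hb⟩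
      _ ≤ ∑ t ∈ T, (ball n r t).card := Finset.card_biUnion_le
      _ ≤ ∑ _t ∈ T, Bmax := by
          refine Finset.sum_le_sum ?_
          intro t ht
          exact ball_card n r hrn t (mem_allB.1 (hTsub ht))
      _ = T.card * Bmax := by rw [Finset.sum_const, smul_eq_mul]
  -- Bmax ≤ (∑ choose) * (choose r * 2^r)
  have hBnat : Bmax ≤ (∑ k ∈ Finset.range (r+1), n.choose k) * (n.choose r * 2 ^ r) := by
    rw [hBdef, Finset.sum_mul]
    refine Finset.sum_le_sum ?_
    intro k hk
    rw [Finset.mem_range] at hk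
    exact Nat.mul_le_mul_left _ (Nat.mul_le_mul
      (choose_mono_half n r k (by omega) h2r)
      (Nat.pow_le_pow_right (by norm_num) (by omega)))
  -- real bounds
  set u : ℝ := ((250:ℝ)/9)^r * ((250:ℝ)/241)^(n-r) with hudef
  have hu0 : 0 < u := by rw [hudef]; positivity
  have hPu : ((9:ℝ)/250)^r * ((241:ℝ)/250)^(n-r) * u = 1 := by
    have e : ((9:ℝ)/250)^r * ((241:ℝ)/250)^(n-r) * u
        = (((9:ℝ)/250)^r * ((250:ℝ)/9)^r) * (((241:ℝ)/250)^(n-r) * ((250:ℝ)/241)^(n-r)) := by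
      rw [hudef]; ring
    rw [e, ← mul_pow, ← mul_pow]
    norm_num
  have hsum_le : (∑ k ∈ Finset.range (r+1), (n.choose k : ℝ)) ≤ u := by
    have h := sum_term n r hrn
    have e : (∑ k ∈ Finset.range (r+1), (n.choose k : ℝ))
        = ((∑ k ∈ Finset.range (r+1), (n.choose k : ℝ))
            * (((9:ℝ)/250)^r * ((241:ℝ)/250)^(n-r))) * u := by
      rw [mul_assoc, hPu, mul_one]
    rw [e]
    calc _ ≤ 1 * u := mul_le_mul_of_nonneg_right h hu0.le
      _ = u := one_mul u
  have hsingle_le : (n.choose r : ℝ) ≤ u := by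
    have hmem : (n.choose r : ℝ) ≤ ∑ k ∈ Finset.range (r+1), (n.choose k : ℝ) :=
      Finset.single_le_sum (f := fun k => (n.choose k : ℝ)) (fun k _ => Nat.cast_nonneg _) (Finset.self_mem_range_succ r)
    exact hmem.trans hsum_le
  have hBreal : (Bmax : ℝ) ≤ (2:ℝ)^((n:ℝ)/2) := by
    have hcast : (Bmax : ℝ) ≤ (∑ k ∈ Finset.range (r+1), (n.choose k : ℝ)) * ((n.choose r : ℝ) * 2 ^ r) := by
      have := hBnat
      push_cast
      exact_mod_cast Nat.cast_le.2 this
    refine hcast.trans ?_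
    have hstep : (∑ k ∈ Finset.range (r+1), (n.choose k : ℝ)) * ((n.choose r : ℝ) * 2 ^ r)
        ≤ u * (u * 2 ^ r) := by
      refine mul_le_mul hsum_le ?_ (by positivity) (le_of_lt hu0)
      exact mul_le_mul_of_nonneg_right hsingle_le (by positivity)
    refine hstep.trans ?_
    have : u * (u * 2 ^ r) = (((250:ℝ)/9)^r * ((250:ℝ)/241)^(n-r))^2 * 2^r := by
      rw [hudef]; ring
    rw [this]
    exact numeric_key n r h9
  -- conclude
  refine ⟨T, fun x hx => mem_allB.1 (hTsub hx), hTpair, ?_⟩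
  have hZ0 : (0:ℝ) < (2:ℝ)^((n:ℝ)/2) := Real.rpow_pos_of_pos (by norm_num) _
  have hZZ : (2:ℝ)^((n:ℝ)/2) * (2:ℝ)^((n:ℝ)/2) = (2:ℝ)^(n:ℕ) := by
    rw [← Real.rpow_add (by norm_num : (0:ℝ) < 2)]
    rw [show (n:ℝ)/2 + (n:ℝ)/2 = ((n:ℕ):ℝ) by ring, Real.rpow_natCast]
  have hchain : (2:ℝ)^((n:ℝ)/2) * (2:ℝ)^((n:ℝ)/2) ≤ (T.card : ℝ) * (2:ℝ)^((n:ℝ)/2) := by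
    rw [hZZ]
    calc (2:ℝ)^(n:ℕ) ≤ ((T.card * Bmax : ℕ) : ℝ) := by exact_mod_cast hcount
      _ = (T.card : ℝ) * (Bmax : ℝ) := by push_cast; ring
      _ ≤ (T.card : ℝ) * (2:ℝ)^((n:ℝ)/2) :=
          mul_le_mul_of_nonneg_left hBreal (Nat.cast_nonneg _)
  exact le_of_mul_le_mul_right hchain hZ0
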